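/- Let V : ℝ² → ℝ be a C² harmonic function, and suppose there exists a constant b ∈ ℝ such that V(q) ≥ -b·|q|² for all q ∈ ℝ². Then every maximal solution q : I → ℝ² of the ODE q̈(t) = -∇V(q(t)) is defined on all of ℝ (i.e., the system admits global solutions for all initial data). -/

import Mathlib

open Set

noncomputable section

/-- The Euclidean plane. -/
abbrev E2 := EuclideanSpace ℝ (Fin 2)

/-- A function `V : ℝ² → ℝ` is harmonic if its Laplacian (the sum of its
second partial derivatives) vanishes identically. -/
def Harmonic2 (V : E2 → ℝ) : Prop :=
  ∀ p : E2, ∑ i : Fin 2,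
    fderiv ℝ (fun q => fderiv ℝ V q (EuclideanSpace.single i 1)) p
      (EuclideanSpace.single i 1) = 0

/-- `q` (with velocity `v`) solves the second-order ODE `q̈(t) = F (t, q(t))`
on the set `s`. -/
def SolOn (F : ℝ → E2 → E2) (q v : ℝ → E2) (s : Set ℝ) : Prop :=
  ∀ t ∈ s, HasDerivAt q (v t) t ∧ HasDerivAt v (F t (q t)) t

/-- `q` (with velocity `v`) is a maximal solution of `q̈(t) = F (t, q(t))` on
the open interval `s`: it solves the ODE there and admits no extension to a
strictly larger open interval. -/
def IsMaximalSolution (F : ℝ → E2 → E2) (q v : ℝ → E2) (s : Set ℝ) : Prop :=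
  IsOpen s ∧ s.OrdConnected ∧ s.Nonempty ∧ SolOn F q v s ∧
  ∀ (s' : Set ℝ) (q' v' : ℝ → E2), IsOpen s' → s'.OrdConnected → s ⊆ s' →
    SolOn F q' v' s' → (∀ t ∈ s, q' t = q t ∧ v' t = v t) → s' = s

open InnerProductSpace
open scoped RealInnerProductSpace Classical

namespace CRS
variable {V : E2 → ℝ}

def Gv (V : E2 → ℝ) : E2 × E2 → E2 × E2 := fun p => (p.2, -gradient V p.1)

lemma contDiff_gradient (hC2 : ContDiff ℝ 2 V) : ContDiff ℝ 1 (gradient V) := by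
  have h2 : ContDiff ℝ ((1 : ℕ) + 1) V := by exact_mod_cast hC2
  exact ((toDual ℝ E2).symm.contDiff).comp (contDiff_succ_iff_fderiv.mp h2).2.2

lemma fderiv_eq_inner_gradient (x y : E2) :
    fderiv ℝ V x y = ⟪gradient V x, y⟫_ℝ := by
  rw [gradient, ← toDual_apply_apply, (toDual ℝ E2).apply_symm_apply]

/-- Energy along a solution. -/
def En (V : E2 → ℝ) (q v : ℝ → E2) (t : ℝ) : ℝ := (1/2 : ℝ) * ⟪v t, v t⟫_ℝ + V (q t)

lemma hasDerivAt_En (hC2 : ContDiff ℝ 2 V) {q v : ℝ → E2} {t : ℝ}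
    (hq : HasDerivAt q (v t) t) (hv : HasDerivAt v (-gradient V (q t)) t) :
    HasDerivAt (En V q v) 0 t := by
  have h1 : HasDerivAt (fun t => ⟪v t, v t⟫_ℝ)
      (⟪v t, -gradient V (q t)⟫_ℝ + ⟪-gradient V (q t), v t⟫_ℝ) t :=
    HasDerivAt.inner ℝ hv hv
  have h2 : HasDerivAt (fun t => V (q t)) (fderiv ℝ V (q t) (v t)) t :=
    (hC2.differentiable (by norm_num) (q t)).hasFDerivAt.comp_hasDerivAt t hq
  have h3 := (h1.const_mul (1/2 : ℝ)).add h2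
  refine h3.congr_deriv ?_
  rw [fderiv_eq_inner_gradient, real_inner_comm (v t)]
  simp [inner_neg_left, inner_neg_right]
  ring

/-- Energy is conserved forward of `t1`. -/
lemma En_const (hC2 : ContDiff ℝ 2 V) {q v : ℝ → E2} {a T t1 : ℝ}
    (hsol : SolOn (fun _ p => -gradient V p) q v (Ioo a T)) (ht1 : t1 ∈ Ioo a T) :
    ∀ t ∈ Ico t1 T, En V q v t = En V q v t1 := by
  intro t ht
  have hsub : Icc t1 t ⊆ Ioo a T := fun x hx => ⟨lt_of_lt_of_le ht1.1 hx.1, lt_of_le_of_lt hx.2 ht.2⟩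
  have hder : ∀ x ∈ Icc t1 t, HasDerivAt (En V q v) 0 x := fun x hx =>
    hasDerivAt_En hC2 (hsol x (hsub hx)).1 (hsol x (hsub hx)).2
  exact constant_of_has_deriv_right_zero
    (fun x hx => (hder x hx).continuousAt.continuousWithinAt)
    (fun x hx => (hder x (Ico_subset_Icc_self hx)).hasDerivWithinAt) t
    ⟨ht.1, le_refl t⟩

lemma contDiff_Gv (hC2 : ContDiff ℝ 2 V) : ContDiff ℝ 1 (Gv V) :=
  contDiff_snd.prodMk ((contDiff_gradient hC2).comp contDiff_fst).neg

lemma bound_on_Ico (hC2 : ContDiff ℝ 2 V) {b : ℝ} (hbound : ∀ p : E2, V p ≥ -b * ‖p‖ ^ 2)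
    {q v : ℝ → E2} {a T t1 : ℝ}
    (hsol : SolOn (fun _ p => -gradient V p) q v (Ioo a T)) (ht1 : t1 ∈ Ioo a T) :
    ∃ r : ℝ, ∀ t ∈ Ico t1 T, ‖q t‖ ≤ r ∧ ‖v t‖ ≤ r := by
  have hsub : Ico t1 T ⊆ Ioo a T := fun x hx => ⟨lt_of_lt_of_le ht1.1 hx.1, hx.2⟩
  set E0 := En V q v t1 with hE0
  have hE := En_const hC2 hsol ht1
  set K := 1 + 2 * |b| with hK
  set c := 2 * |E0| with hc
  have hc0 : 0 ≤ c := by positivity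
  have hK1 : 1 ≤ K := le_add_of_nonneg_right (by positivity)
  set w : ℝ → ℝ := fun t => ⟪q t, q t⟫_ℝ with hw
  have hw0 : ∀ t, 0 ≤ w t := fun t => real_inner_self_nonneg
  have hwsq : ∀ t, w t = ‖q t‖ ^ 2 := fun t => real_inner_self_eq_norm_sq _
  -- velocity bound from energy
  have hv2 : ∀ t ∈ Ico t1 T, ⟪v t, v t⟫_ℝ ≤ c + 2 * |b| * w t := by
    intro t ht
    have h1 := hE t ht
    have h2 := hbound (q t)
    have h3 : ⟪v t, v t⟫_ℝ = ‖v t‖ ^ 2 := real_inner_self_eq_norm_sq _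
    have h4 := abs_le.mp (le_refl |E0|)
    have h5 : b ≤ |b| := le_abs_self b
    rw [En] at h1
    nlinarith [hwsq t, hw0 t, sq_nonneg (‖q t‖)]
  set g : ℝ → ℝ := fun t => (w t + c) * Real.exp (-K * t) with hg
  have hgder : ∀ t ∈ Ico t1 T,
      HasDerivAt g ((⟪q t, v t⟫_ℝ + ⟪v t, q t⟫_ℝ) * Real.exp (-K * t)
        + (w t + c) * (Real.exp (-K * t) * -K)) t := by
    intro t ht
    have hq := (hsol t (hsub ht)).1
    have h1 : HasDerivAt w (⟪q t, v t⟫_ℝ + ⟪v t, q t⟫_ℝ) t := HasDerivAt.inner ℝ hq hq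
    have h2 : HasDerivAt (fun t : ℝ => Real.exp (-K * t)) (Real.exp (-K * t) * -K) t := by
      simpa using ((hasDerivAt_id t).const_mul (-K)).exp
    exact (h1.add_const c).mul h2
  have hganti : AntitoneOn g (Ico t1 T) := by
    apply antitoneOn_of_deriv_nonpos (convex_Ico t1 T)
    · exact fun x hx => ((hgder x hx).continuousAt).continuousWithinAt
    · rw [interior_Ico]
      exact fun x hx => ((hgder x (Ioo_subset_Ico_self hx)).differentiableAt).differentiableWithinAt
    · rw [interior_Ico]
      intro x hx
      have hx' := Ioo_subset_Ico_self hx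
      rw [(hgder x hx').deriv]
      have hqv : ⟪q x, v x⟫_ℝ + ⟪v x, q x⟫_ℝ ≤ K * (w x + c) := by
        have h1 : ⟪q x, v x⟫_ℝ ≤ ‖q x‖ * ‖v x‖ := real_inner_le_norm _ _
        have h2 : ⟪v x, q x⟫_ℝ ≤ ‖q x‖ * ‖v x‖ := by
          rw [real_inner_comm]; exact real_inner_le_norm _ _
        have h3 := hv2 x hx'
        have h4 : ⟪v x, v x⟫_ℝ = ‖v x‖ ^ 2 := real_inner_self_eq_norm_sq _
        have h5 : 0 ≤ |b| := abs_nonneg b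
        nlinarith [hwsq x, hw0 x, sq_nonneg (‖q x‖ - ‖v x‖)]
      have he : 0 < Real.exp (-K * x) := Real.exp_pos _
      nlinarith [mul_le_mul_of_nonneg_right hqv he.le]
  -- conclude the bound
  set B := (w t1 + c) * Real.exp (K * (T - t1)) with hB
  have hwB : ∀ t ∈ Ico t1 T, w t ≤ B := by
    intro t ht
    have h1 : g t ≤ g t1 := hganti (left_mem_Ico.mpr ht1.2) ht ht.1
    have he1 : 0 < Real.exp (-K * t) := Real.exp_pos _
    have h2 : w t + c ≤ (w t1 + c) * Real.exp (-K * t1) / Real.exp (-K * t) := by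
      rw [le_div_iff₀ he1]; exact h1
    have h3 : Real.exp (-K * t1) / Real.exp (-K * t) = Real.exp (K * (t - t1)) := by
      rw [← Real.exp_sub]; ring_nf
    have h4 : Real.exp (K * (t - t1)) ≤ Real.exp (K * (T - t1)) := by
      apply Real.exp_le_exp.mpr
      have hK0 : (0:ℝ) ≤ K := le_trans zero_le_one hK1
      nlinarith [ht.2.le]
    have h5 : 0 ≤ w t1 + c := add_nonneg (hw0 t1) hc0
    calc w t ≤ w t + c := le_add_of_nonneg_right hc0
      _ ≤ (w t1 + c) * Real.exp (K * (t - t1)) := by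
          rw [mul_div_assoc] at h2; rwa [h3] at h2
      _ ≤ B := by apply mul_le_mul_of_nonneg_left h4 h5
  have hB0 : 0 ≤ B := le_trans (hw0 t1) (hwB t1 (left_mem_Ico.mpr ht1.2))
  set B2 := c + 2 * |b| * B with hB2
  have hB20 : 0 ≤ B2 := by positivity
  refine ⟨max (Real.sqrt B) (Real.sqrt B2), fun t ht => ⟨?_, ?_⟩⟩
  · refine le_trans ?_ (le_max_left _ _)
    rw [show Real.sqrt B = Real.sqrt B from rfl, ← Real.sqrt_sq (norm_nonneg (q t))]
    apply Real.sqrt_le_sqrt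
    rw [← hwsq t]; exact hwB t ht
  · refine le_trans ?_ (le_max_right _ _)
    rw [← Real.sqrt_sq (norm_nonneg (v t))]
    apply Real.sqrt_le_sqrt
    have h1 := hv2 t ht
    have h4 : ⟪v t, v t⟫_ℝ = ‖v t‖ ^ 2 := real_inner_self_eq_norm_sq _
    have := hwB t ht
    have h5 : 0 ≤ |b| := abs_nonneg b
    nlinarith
lemma lipschitzOnBall (G : E2 × E2 → E2 × E2) (hG : ContDiff ℝ 1 G) (ρ : ℝ) :
    ∃ L : NNReal, LipschitzOnWith L G (Metric.closedBall 0 ρ) := by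
  obtain ⟨L0, hL0⟩ := (isCompact_closedBall (0 : E2 × E2) ρ).exists_bound_of_continuousOn
      ((hG.continuous_fderiv one_ne_zero).continuousOn)
  refine ⟨L0.toNNReal, (convex_closedBall (0 : E2 × E2) ρ).lipschitzOnWith_of_nnnorm_fderiv_le
      (fun x _ => (hG.differentiable one_ne_zero).differentiableAt) (fun x hx => ?_)⟩
  rw [← NNReal.coe_le_coe, coe_nnnorm, Real.coe_toNNReal']
  exact le_trans (hL0 x hx) (le_max_left _ _)

lemma exists_unif (G : E2 × E2 → E2 × E2) (hG : ContDiff ℝ 1 G) (r : ℝ) :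
    ∃ δ > (0:ℝ), ∀ (t₀ : ℝ) (x₀ : E2 × E2), ‖x₀‖ ≤ r →
      ∃ f : ℝ → E2 × E2, f t₀ = x₀ ∧
        ∀ t ∈ Ioo (t₀ - δ) (t₀ + δ), HasDerivAt f (G (f t)) t := by
  obtain ⟨L, hL⟩ := lipschitzOnBall G hG (r + 1)
  obtain ⟨M0, hM0⟩ := (isCompact_closedBall (0 : E2 × E2) (r + 1)).exists_bound_of_continuousOn
      hG.continuous.continuousOn
  set M := max M0 0 with hM
  have hM0' : 0 ≤ M := le_max_right _ _
  set δ := 1 / (M + 1) with hδdef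
  have hδ : 0 < δ := by positivity
  refine ⟨δ, hδ, fun t₀ x₀ hx₀ => ?_⟩
  have hsub : Metric.closedBall x₀ 1 ⊆ Metric.closedBall 0 (r + 1) := by
    intro y hy
    rw [Metric.mem_closedBall, dist_zero_right]
    rw [Metric.mem_closedBall] at hy
    calc ‖y‖ = ‖y - x₀ + x₀‖ := by rw [sub_add_cancel]
      _ ≤ ‖y - x₀‖ + ‖x₀‖ := norm_add_le _ _
      _ ≤ 1 + r := by
          rw [← dist_eq_norm] at *
          exact add_le_add hy hx₀
      _ = r + 1 := by ring
  have ht₀mem : t₀ ∈ Icc (t₀ - δ) (t₀ + δ) := ⟨by linarith, by linarith⟩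
  have hpl : IsPicardLindelof (fun _ => G) (⟨t₀, ht₀mem⟩ : Icc (t₀ - δ) (t₀ + δ)) x₀ 1 0
      M.toNNReal L :=
    { lipschitzOnWith := fun t _ => hL.mono (by rw [NNReal.coe_one]; exact hsub)
      continuousOn := fun x _ => continuousOn_const
      norm_le := fun t _ x hx => by
        rw [Real.coe_toNNReal _ hM0']
        exact le_trans (hM0 x (hsub (by simpa using hx))) (le_max_left _ _)
      mul_max_le := by
        have : max (t₀ + δ - t₀) (t₀ - (t₀ - δ)) = δ := by rw [max_eq_left] <;> linarith
        show (M.toNNReal : ℝ) * max (t₀ + δ - t₀) (t₀ - (t₀ - δ))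
          ≤ ((1 : NNReal) : ℝ) - ((0 : NNReal) : ℝ)
        rw [this, hδdef, Real.coe_toNNReal _ hM0', NNReal.coe_one, NNReal.coe_zero, sub_zero]
        rw [mul_one_div, div_le_one (by linarith)]
        linarith }
  obtain ⟨f, hf0, hf⟩ := hpl.exists_eq_forall_mem_Icc_hasDerivWithinAt₀
  exact ⟨f, hf0, fun t ht => (hf t (Ioo_subset_Icc_self ht)).hasDerivAt (Icc_mem_nhds ht.1 ht.2)⟩
lemma extend_fwd (hC2 : ContDiff ℝ 2 V) {b : ℝ} (hbound : ∀ p : E2, V p ≥ -b * ‖p‖ ^ 2)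
    {q v : ℝ → E2} {a T : ℝ} (haT : a < T)
    (hsol : SolOn (fun _ p => -gradient V p) q v (Ioo a T)) :
    ∃ ε > (0:ℝ), ∃ Q W : ℝ → E2,
      SolOn (fun _ p => -gradient V p) Q W (Ioo a (T + ε)) ∧
      ∀ t ∈ Ioo a T, Q t = q t ∧ W t = v t := by
  have ht1' : (a + T) / 2 ∈ Ioo a T := ⟨by linarith, by linarith⟩
  set t1' := (a + T) / 2 with ht1'def
  obtain ⟨r, hr⟩ := bound_on_Ico hC2 hbound hsol ht1'
  set z : ℝ → E2 × E2 := fun t => (q t, v t) with hzdef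
  have hz : ∀ t ∈ Ico t1' T, ‖z t‖ ≤ r := by
    intro t ht
    rw [Prod.norm_def]
    exact max_le (hr t ht).1 (hr t ht).2
  have hzsol : ∀ t ∈ Ioo a T, HasDerivAt z (Gv V (z t)) t :=
    fun t ht => ((hsol t ht).1).prodMk ((hsol t ht).2)
  obtain ⟨δ, hδ, hexist⟩ := exists_unif (Gv V) (contDiff_Gv hC2) r
  set t1 := max ((t1' + T) / 2) (T - δ / 2) with ht1def
  have ht1a : t1' < t1 := lt_max_of_lt_left (by rw [ht1'def]; linarith [ht1'.2])
  have ht1T : t1 < T := max_lt (by linarith [ht1'.2]) (by linarith)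
  have ht1δ : T - δ / 2 ≤ t1 := le_max_right _ _
  have ht1mem : t1 ∈ Ico t1' T := ⟨ht1a.le, ht1T⟩
  obtain ⟨f, hf0, hfd⟩ := hexist t1 (z t1) (hz t1 ht1mem)
  have hTδ : T + δ / 2 ≤ t1 + δ := by linarith
  -- uniqueness: z = f on [t1, T)
  have hEq : ∀ t ∈ Ico t1 T, z t = f t := by
    intro t ht
    rcases eq_or_lt_of_le ht.1 with h | h
    · rw [← h]; exact hf0.symm
    have hIccIoo : Icc t1 t ⊆ Ioo a T :=
      fun x hx => ⟨by linarith [hx.1, ht1'.1, ht1a], lt_of_le_of_lt hx.2 ht.2⟩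
    have hIccδ : Icc t1 t ⊆ Ioo (t1 - δ) (t1 + δ) :=
      fun x hx => ⟨by linarith [hx.1], by linarith [hx.2, ht.2]⟩
    have hfc : ContinuousOn f (Icc t1 t) :=
      fun x hx => ((hfd x (hIccδ hx)).continuousAt).continuousWithinAt
    obtain ⟨Mf, hMf⟩ := (isCompact_Icc).exists_bound_of_continuousOn hfc
    set ρ := max r Mf with hρdef
    obtain ⟨L, hL⟩ := lipschitzOnBall (Gv V) (contDiff_Gv hC2) ρ
    have key : EqOn z f (Icc t1 t) := by
      apply ODE_solution_unique_of_mem_Icc_right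
        (v := fun _ p => Gv V p) (s := fun _ => Metric.closedBall 0 ρ) (K := L)
        (fun _ _ => hL)
      · exact fun x hx => ((hzsol x (hIccIoo hx)).continuousAt).continuousWithinAt
      · exact fun x hx => (hzsol x (hIccIoo (Ico_subset_Icc_self hx))).hasDerivWithinAt
      · intro x hx
        rw [Metric.mem_closedBall, dist_zero_right]
        exact le_trans (hz x ⟨le_trans ht1a.le hx.1, hx.2.trans ht.2⟩) (le_max_left _ _)
      · exact hfc
      · exact fun x hx => (hfd x (hIccδ (Ico_subset_Icc_self hx))).hasDerivWithinAt
      · intro x hx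
        rw [Metric.mem_closedBall, dist_zero_right]
        exact le_trans (hMf x (Ico_subset_Icc_self hx)) (le_max_right _ _)
      · exact hf0.symm
    exact key (right_mem_Icc.mpr ht.1)
  refine ⟨δ / 2, by linarith, fun t => if t < T then q t else (f t).1,
      fun t => if t < T then v t else (f t).2, ?_, ?_⟩
  · intro t ht
    by_cases htT : t < T
    · have hts : t ∈ Ioo a T := ⟨ht.1, htT⟩
      have hQ : (fun t => if t < T then q t else (f t).1) =ᶠ[nhds t] q :=
        Filter.eventuallyEq_of_mem (Iio_mem_nhds htT) (fun x hx => if_pos hx)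
      have hW : (fun t => if t < T then v t else (f t).2) =ᶠ[nhds t] v :=
        Filter.eventuallyEq_of_mem (Iio_mem_nhds htT) (fun x hx => if_pos hx)
      constructor
      · simp only [if_pos htT]
        exact (hsol t hts).1.congr_of_eventuallyEq hQ
      · simp only [if_pos htT]
        exact (hsol t hts).2.congr_of_eventuallyEq hW
    · push_neg at htT
      have ht1t : t ∈ Ioo t1 (T + δ / 2) := ⟨lt_of_lt_of_le ht1T htT, ht.2⟩
      have htδ : t ∈ Ioo (t1 - δ) (t1 + δ) :=
        ⟨by linarith [ht1t.1], lt_of_lt_of_le ht.2 hTδ⟩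
      have hfd' := hfd t htδ
      have hQf : ∀ x ∈ Ioo t1 (T + δ / 2),
          (if x < T then q x else (f x).1) = (f x).1 ∧
          (if x < T then v x else (f x).2) = (f x).2 := by
        intro x hx
        by_cases hxT : x < T
        · have := hEq x ⟨hx.1.le, hxT⟩
          rw [if_pos hxT, if_pos hxT]
          exact ⟨congrArg Prod.fst this, congrArg Prod.snd this⟩
        · rw [if_neg hxT, if_neg hxT]; exact ⟨rfl, rfl⟩
      have hmem := isOpen_Ioo.mem_nhds ht1t
      have hQf1 : (fun x => if x < T then q x else (f x).1) =ᶠ[nhds t] (fun x => (f x).1) :=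
        Filter.eventuallyEq_of_mem hmem (fun x hx => (hQf x hx).1)
      have hWf1 : (fun x => if x < T then v x else (f x).2) =ᶠ[nhds t] (fun x => (f x).2) :=
        Filter.eventuallyEq_of_mem hmem (fun x hx => (hQf x hx).2)
      have hnlt : ¬ t < T := not_lt.mpr htT
      constructor
      · have h1 : HasDerivAt (fun x => (f x).1) ((f t).2) t := by
          have := (ContinuousLinearMap.fst ℝ E2 E2).hasFDerivAt.comp_hasDerivAt t hfd'
          simpa [Gv, Function.comp_def] using this
        simp only [if_neg hnlt]
        exact h1.congr_of_eventuallyEq hQf1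
      · have h2 : HasDerivAt (fun x => (f x).2) (-gradient V ((f t).1)) t := by
          have := (ContinuousLinearMap.snd ℝ E2 E2).hasFDerivAt.comp_hasDerivAt t hfd'
          simpa [Gv, Function.comp_def] using this
        simp only [if_neg hnlt]
        exact h2.congr_of_eventuallyEq hWf1
  · intro t ht
    simp [if_pos ht.2]
lemma extend_bwd (hC2 : ContDiff ℝ 2 V) {b : ℝ} (hbound : ∀ p : E2, V p ≥ -b * ‖p‖ ^ 2)
    {q v : ℝ → E2} {S c : ℝ} (hSc : S < c)
    (hsol : SolOn (fun _ p => -gradient V p) q v (Ioo S c)) :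
    ∃ ε > (0:ℝ), ∃ Q W : ℝ → E2,
      SolOn (fun _ p => -gradient V p) Q W (Ioo (S - ε) c) ∧
      ∀ t ∈ Ioo S c, Q t = q t ∧ W t = v t := by
  have hsol1 : SolOn (fun _ p => -gradient V p) (fun t => q (-t)) (fun t => -v (-t))
      (Ioo (-c) (-S)) := by
    intro t ht
    have hmt : -t ∈ Ioo S c := ⟨by linarith [ht.2], by linarith [ht.1]⟩
    obtain ⟨hq, hv⟩ := hsol (-t) hmt
    constructor
    · simpa [Function.comp_def] using hq.scomp t (hasDerivAt_neg t)
    · exact (hv.scomp t (hasDerivAt_neg t)).neg.congr_deriv (by simp)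
  obtain ⟨ε, hε, Q1, W1, hsolQ1, hagree⟩ := extend_fwd hC2 hbound (by linarith) hsol1
  refine ⟨ε, hε, fun t => Q1 (-t), fun t => -W1 (-t), ?_, ?_⟩
  · intro t ht
    have hmt : -t ∈ Ioo (-c) (-S + ε) := ⟨by linarith [ht.2], by linarith [ht.1]⟩
    obtain ⟨hq, hv⟩ := hsolQ1 (-t) hmt
    constructor
    · simpa [Function.comp_def] using hq.scomp t (hasDerivAt_neg t)
    · exact (hv.scomp t (hasDerivAt_neg t)).neg.congr_deriv (by simp)
  · intro t ht
    have hmt : -t ∈ Ioo (-c) (-S) := ⟨by linarith [ht.2], by linarith [ht.1]⟩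
    obtain ⟨h1, h2⟩ := hagree (-t) hmt
    refine ⟨by simpa using h1, ?_⟩
    show -W1 (-t) = v t
    rw [h2]; simp

end CRS

/-- **Candela–Romero–Sánchez (2013).**  If `V : ℝ² → ℝ` is a `C²` harmonic
function bounded below by a negative quadratic, `V q ≥ -b‖q‖²`, then every
maximal solution of `q̈ = -∇V(q)` is defined on all of `ℝ`. -/
theorem candela_romero_sanchez (V : E2 → ℝ) (hC2 : ContDiff ℝ 2 V)
    (hharm : Harmonic2 V) (b : ℝ) (hbound : ∀ q : E2, V q ≥ -b * ‖q‖ ^ 2) :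
    ∀ (q v : ℝ → E2) (s : Set ℝ),
      IsMaximalSolution (fun _ p => -gradient V p) q v s → s = univ := by
  intro q v s hmax
  obtain ⟨hopen, hconn, ⟨t0, ht0⟩, hsol, hmaxl⟩ := hmax
  have hup : ¬ BddAbove s := by
    intro hbdd
    set T := sSup s with hT
    have hts : ∀ x ∈ s, x ≤ T := fun x hx => le_csSup hbdd hx
    have hTn : T ∉ s := by
      intro hTs
      obtain ⟨ε, hε, hball⟩ := Metric.isOpen_iff.mp hopen T hTs
      have hmem : T + ε / 2 ∈ s := by
        apply hball
        rw [Metric.mem_ball, Real.dist_eq, show T + ε / 2 - T = ε / 2 by ring,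
          abs_of_pos (by linarith)]
        linarith
      linarith [hts _ hmem]
    have ht0T : t0 < T := lt_of_le_of_ne (hts t0 ht0) (fun h => hTn (h ▸ ht0))
    have hIoo : Ioo t0 T ⊆ s := by
      intro x hx
      obtain ⟨u, hu, hxu⟩ := exists_lt_of_lt_csSup ⟨t0, ht0⟩ hx.2
      exact hconn.out ht0 hu ⟨hx.1.le, hxu.le⟩
    obtain ⟨ε, hε, Q, W, hsolQ, hagree⟩ :=
      CRS.extend_fwd hC2 hbound ht0T (fun t ht => hsol t (hIoo ht))
    set I := Ioo t0 (T + ε) with hIdef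
    set s' := s ∪ I with hs'def
    set q' := fun t => if t ∈ s then q t else Q t with hq'def
    set v' := fun t => if t ∈ s then v t else W t with hv'def
    have hso : IsOpen s' := hopen.union isOpen_Ioo
    have hsconn : s'.OrdConnected := by
      refine ⟨fun x hx y hy => fun zz hz => ?_⟩
      rcases le_or_gt zz t0 with hle | hgt
      · have hxs : x ∈ s := by
          rcases hx with hxs | hxI
          · exact hxs
          · exact absurd hxI.1 (by linarith [hz.1])
        exact Or.inl (hconn.out hxs ht0 ⟨hz.1, hle⟩)
      · rcases lt_or_ge zz (T + ε) with hlt | hge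
        · exact Or.inr ⟨hgt, hlt⟩
        · exfalso
          rcases hy with hys | hyI
          · linarith [hts y hys, hz.2]
          · linarith [hyI.2, hz.2]
    have hQI : ∀ x ∈ I, q' x = Q x ∧ v' x = W x := by
      intro x hxI
      by_cases hxs : x ∈ s
      · have hxT : x < T := lt_of_le_of_ne (hts x hxs) (fun h => hTn (h ▸ hxs))
        obtain ⟨h1, h2⟩ := hagree x ⟨hxI.1, hxT⟩
        simp only [hq'def, hv'def, if_pos hxs]
        exact ⟨h1.symm, h2.symm⟩
      · simp only [hq'def, hv'def, if_neg hxs]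
        exact ⟨trivial, trivial⟩
    have hsol' : SolOn (fun _ p => -gradient V p) q' v' s' := by
      intro t ht
      by_cases hts' : t ∈ s
      · have hq'e : q' =ᶠ[nhds t] q :=
          Filter.eventuallyEq_of_mem (hopen.mem_nhds hts') (fun x hx => by
            simp only [hq'def, if_pos hx])
        have hv'e : v' =ᶠ[nhds t] v :=
          Filter.eventuallyEq_of_mem (hopen.mem_nhds hts') (fun x hx => by
            simp only [hv'def, if_pos hx])
        constructor
        · have : v' t = v t := by simp only [hv'def, if_pos hts']
          rw [this]
          exact (hsol t hts').1.congr_of_eventuallyEq hq'e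
        · have : q' t = q t := by simp only [hq'def, if_pos hts']
          rw [this]
          exact (hsol t hts').2.congr_of_eventuallyEq hv'e
      · have htI : t ∈ I := ht.resolve_left hts'
        have hq'e : q' =ᶠ[nhds t] Q :=
          Filter.eventuallyEq_of_mem (isOpen_Ioo.mem_nhds htI) (fun x hx => (hQI x hx).1)
        have hv'e : v' =ᶠ[nhds t] W :=
          Filter.eventuallyEq_of_mem (isOpen_Ioo.mem_nhds htI) (fun x hx => (hQI x hx).2)
        constructor
        · rw [(hQI t htI).2]
          exact (hsolQ t htI).1.congr_of_eventuallyEq hq'e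
        · rw [(hQI t htI).1]
          exact (hsolQ t htI).2.congr_of_eventuallyEq hv'e
    have hagr : ∀ t ∈ s, q' t = q t ∧ v' t = v t := by
      intro t hts'
      simp only [hq'def, hv'def, if_pos hts']
      exact ⟨trivial, trivial⟩
    have heq := hmaxl s' q' v' hso hsconn subset_union_left hsol' hagr
    have hTs' : T ∈ s' := Or.inr ⟨ht0T, by linarith⟩
    rw [heq] at hTs'
    exact hTn hTs'
  have hdown : ¬ BddBelow s := by
    intro hbdd
    set S := sInf s with hS
    have hts : ∀ x ∈ s, S ≤ x := fun x hx => csInf_le hbdd hx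
    have hSn : S ∉ s := by
      intro hSs
      obtain ⟨ε, hε, hball⟩ := Metric.isOpen_iff.mp hopen S hSs
      have hmem : S - ε / 2 ∈ s := by
        apply hball
        rw [Metric.mem_ball, Real.dist_eq, show S - ε / 2 - S = -(ε / 2) by ring,
          abs_neg, abs_of_pos (by linarith)]
        linarith
      linarith [hts _ hmem]
    have hSt0 : S < t0 := lt_of_le_of_ne (hts t0 ht0) (fun h => hSn (h ▸ ht0))
    have hIoo : Ioo S t0 ⊆ s := by
      intro x hx
      obtain ⟨u, hu, hxu⟩ := exists_lt_of_csInf_lt ⟨t0, ht0⟩ hx.1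
      exact hconn.out hu ht0 ⟨hxu.le, hx.2.le⟩
    obtain ⟨ε, hε, Q, W, hsolQ, hagree⟩ :=
      CRS.extend_bwd hC2 hbound hSt0 (fun t ht => hsol t (hIoo ht))
    set I := Ioo (S - ε) t0 with hIdef
    set s' := s ∪ I with hs'def
    set q' := fun t => if t ∈ s then q t else Q t with hq'def
    set v' := fun t => if t ∈ s then v t else W t with hv'def
    have hso : IsOpen s' := hopen.union isOpen_Ioo
    have hsconn : s'.OrdConnected := by
      refine ⟨fun x hx y hy => fun zz hz => ?_⟩
      rcases le_or_gt t0 zz with hle | hgt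
      · have hys : y ∈ s := by
          rcases hy with hys | hyI
          · exact hys
          · exact absurd hyI.2 (by linarith [hz.2])
        exact Or.inl (hconn.out ht0 hys ⟨hle, hz.2⟩)
      · rcases lt_or_ge (S - ε) zz with hlt | hge
        · exact Or.inr ⟨hlt, hgt⟩
        · exfalso
          rcases hx with hxs | hxI
          · linarith [hts x hxs, hz.1]
          · linarith [hxI.1, hz.1]
    have hQI : ∀ x ∈ I, q' x = Q x ∧ v' x = W x := by
      intro x hxI
      by_cases hxs : x ∈ s
      · have hxS : S < x := lt_of_le_of_ne (hts x hxs) (fun h => hSn (h ▸ hxs))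
        obtain ⟨h1, h2⟩ := hagree x ⟨hxS, hxI.2⟩
        simp only [hq'def, hv'def, if_pos hxs]
        exact ⟨h1.symm, h2.symm⟩
      · simp only [hq'def, hv'def, if_neg hxs]
        exact ⟨trivial, trivial⟩
    have hsol' : SolOn (fun _ p => -gradient V p) q' v' s' := by
      intro t ht
      by_cases hts' : t ∈ s
      · have hq'e : q' =ᶠ[nhds t] q :=
          Filter.eventuallyEq_of_mem (hopen.mem_nhds hts') (fun x hx => by
            simp only [hq'def, if_pos hx])
        have hv'e : v' =ᶠ[nhds t] v :=
          Filter.eventuallyEq_of_mem (hopen.mem_nhds hts') (fun x hx => by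
            simp only [hv'def, if_pos hx])
        constructor
        · have : v' t = v t := by simp only [hv'def, if_pos hts']
          rw [this]
          exact (hsol t hts').1.congr_of_eventuallyEq hq'e
        · have : q' t = q t := by simp only [hq'def, if_pos hts']
          rw [this]
          exact (hsol t hts').2.congr_of_eventuallyEq hv'e
      · have htI : t ∈ I := ht.resolve_left hts'
        have hq'e : q' =ᶠ[nhds t] Q :=
          Filter.eventuallyEq_of_mem (isOpen_Ioo.mem_nhds htI) (fun x hx => (hQI x hx).1)
        have hv'e : v' =ᶠ[nhds t] W :=
          Filter.eventuallyEq_of_mem (isOpen_Ioo.mem_nhds htI) (fun x hx => (hQI x hx).2)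
        constructor
        · rw [(hQI t htI).2]
          exact (hsolQ t htI).1.congr_of_eventuallyEq hq'e
        · rw [(hQI t htI).1]
          exact (hsolQ t htI).2.congr_of_eventuallyEq hv'e
    have hagr : ∀ t ∈ s, q' t = q t ∧ v' t = v t := by
      intro t hts'
      simp only [hq'def, hv'def, if_pos hts']
      exact ⟨trivial, trivial⟩
    have heq := hmaxl s' q' v' hso hsconn subset_union_left hsol' hagr
    have hSs' : S ∈ s' := Or.inr ⟨by linarith, hSt0⟩
    rw [heq] at hSs'
    exact hSn hSs'
  rw [eq_univ_iff_forall]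
  intro x
  obtain ⟨y1, hy1, hxy1⟩ := not_bddBelow_iff.mp hdown x
  obtain ⟨y2, hy2, hxy2⟩ := not_bddAbove_iff.mp hup x
  exact hconn.out hy1 hy2 ⟨hxy1.le, hxy2.le⟩

end
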